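/- Let {X_i}_{i≥1} be positive integers, W_n = X_1 + ... + X_n, and fix a positive integer n with W_1 ≤ n. Let T_n = max{i : W_i ≤ n} and, for 1 ≤ i ≤ T_n, let R_i = n - W_{T_n} + X_{T_n} + X_{T_n - 1} + ... + X_{T_n - i + 1}. If n cannot be written as the sum of two distinct elements of {W_m}_{m≥1}, then {W_i : 1 ≤ i ≤ T_n} ∩ {R_i : 1 ≤ i ≤ T_n} ∩ [1, n/3] = ∅. -/

import Mathlib

/-- Deterministic lemma: with positive integer gaps `X`, weights
`W n = X 1 + ⋯ + X n`, a target `n ≥ W 1`, `T = max {i : W i ≤ n}` and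
`R i = n - W T + (X T + X (T-1) + ⋯ + X (T-i+1))`, if `n` is not the sum of two
distinct weights then no common value of the `W i` and `R i'` (for
`1 ≤ i, i' ≤ T`) lies in `[1, n/3]`. -/
theorem stmt6
    (X : ℕ → ℕ) (hpos : ∀ i, 0 < X i)
    (W : ℕ → ℕ) (hW : ∀ m, W m = ∑ i ∈ Finset.Icc 1 m, X i)
    (n : ℕ) (hn : W 1 ≤ n)
    (T : ℕ) (hT₁ : W T ≤ n) (hT₂ : ∀ i, W i ≤ n → i ≤ T)
    (R : ℕ → ℕ) (hR : ∀ i, R i = n - W T + ∑ j ∈ Finset.range i, X (T - j))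
    (hnot : ¬ ∃ i j : ℕ, 1 ≤ i ∧ 1 ≤ j ∧ i ≠ j ∧ W i + W j = n) :
    ∀ i ∈ Finset.Icc 1 T, ∀ i' ∈ Finset.Icc 1 T,
      ¬ (W i = R i' ∧ 1 ≤ W i ∧ 3 * W i ≤ n) := by
  -- successor recurrence for W
  have hWsucc : ∀ k : ℕ, W (k + 1) = W k + X (k + 1) := by
    intro k
    rw [hW, hW, Finset.sum_Icc_succ_top (Nat.le_add_left 1 k)]
  -- key: for i' ≤ T, W (T - i') + ∑ j in range i', X (T - j) = W T
  have key : ∀ i' : ℕ, i' ≤ T → W (T - i') + ∑ j ∈ Finset.range i', X (T - j) = W T := by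
    intro i' hi'
    induction i' with
    | zero => simp
    | succ k ih =>
      have hk : k ≤ T := Nat.le_of_succ_le hi'
      have hkT : k < T := hi'
      rw [Finset.sum_range_succ]
      have h1 : T - (k + 1) + 1 = T - k := by omega
      have h2 : W (T - (k + 1)) + X (T - k) = W (T - k) := by
        have := hWsucc (T - (k + 1))
        rw [h1] at this
        omega
      have := ih hk
      omega
  have hWmono : ∀ a b : ℕ, a ≤ b → W a ≤ W b := by
    intro a b hab
    rw [hW, hW]
    exact Finset.sum_le_sum_of_subset (Finset.Icc_subset_Icc_right hab)
  intro i hi i' hi' ⟨heq, h1, h3⟩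
  simp only [Finset.mem_Icc] at hi hi'
  have hsum := key i' hi'.2
  have hWle : W (T - i') ≤ W T := hWmono _ _ (Nat.sub_le _ _)
  have hRval : R i' = n - W (T - i') := by rw [hR]; omega
  have hmain : W i + W (T - i') = n := by
    rw [heq, hRval]
    have : W (T - i') ≤ n := le_trans hWle hT₁
    omega
  -- case analysis
  by_cases h0 : T - i' = 0
  · rw [h0] at hmain
    have : W 0 = 0 := by rw [hW]; simp
    omega
  · by_cases hij : i = T - i'
    · -- 2 W i = n, but 3 W i ≤ n and W i ≥ 1
      rw [← hij] at hmain
      omega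
    · exact hnot ⟨i, T - i', hi.1, Nat.one_le_iff_ne_zero.mpr h0, hij, hmain⟩
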